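/- Fix t ≥ 1. Let s, x, y, z be distinct candidates, let α be a candidate set of size t − 1 disjoint from {s, x, y, z}, and let A be a finite candidate set with {x, y, z} ⊆ A and A disjoint from C := {s} ∪ α. Let A' = A ∖ {x, y, z} and fix a linear order on A'. Let V consist of five linear orders on the candidate type, each ending with the t − 1 members of α in the bottom positions (in a fixed order) preceded by the members of A' in the fixed order, and whose top four candidates are, respectively: s, x, y, z; s, y, z, x; s, z, x, y; x, y, z, s; x, y, z, s. Then for every nonempty Â ⊆ A, the t-veto winner set of the election (C ∪ Â, V) equals Â if and only if Â = {x, y, z}. -/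

import Mathlib

open Finset
open scoped Classical

noncomputable section

variable {Cand : Type*}

/-- `t`-veto score of `c` in the election `(F, V)`, where each vote is a linear order on the
candidate type: the number of votes in which `c` is not among the bottom `t` candidates of
`F`, i.e., in which at least `t` candidates of `F` are ranked below `c`. -/
def vetoScore [DecidableEq Cand] (t : ℕ) (F : Finset Cand)
    (V : List (LinearOrder Cand)) (c : Cand) : ℕ :=
  (V.map fun v => if t ≤ (F.filter fun b => v.lt c b).card then 1 else 0).sum

/-- `t`-veto winner set of the election `(F, V)`: the candidates of `F` with maximum
`t`-veto score. -/
def vetoWinners [DecidableEq Cand] (t : ℕ) (F : Finset Cand)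
    (V : List (LinearOrder Cand)) : Finset Cand :=
  F.filter fun c => ∀ b ∈ F, vetoScore t F V b ≤ vetoScore t F V c

/-- `IsTopSegment v F l` says that, within the candidate set `F`, the vote `v` ranks the
members of the list `l` at the top, in the order in which they are listed (all remaining
candidates of `F` are ranked below all of `l`, in arbitrary order). -/
def IsTopSegment (v : LinearOrder Cand) (F : Finset Cand) (l : List Cand) : Prop :=
  (∀ c ∈ l, c ∈ F) ∧ l.Chain' (fun a b => v.lt a b) ∧
    ∀ b ∈ F, b ∉ l → ∀ c ∈ l, v.lt c b

section AuxLemmas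
variable [DecidableEq Cand]

lemma card_split (v : LinearOrder Cand) {F : Finset Cand} {c : Cand} (hc : c ∈ F) :
    (F.filter fun b => v.lt c b).card + (F.filter fun b => v.lt b c).card + 1 = F.card := by
  have tri : ∀ a b : Cand, v.lt a b ∨ a = b ∨ v.lt b a := fun a b => by
    letI := v; exact lt_trichotomy a b
  have asym : ∀ a b : Cand, v.lt a b → ¬ v.lt b a := fun a b h => by
    letI := v; exact lt_asymm h
  have irr : ∀ a : Cand, ¬ v.lt a a := fun a => by letI := v; exact lt_irrefl a
  have hU : (F.filter fun b => v.lt c b) ∪ ((F.filter fun b => v.lt b c) ∪ {c}) = F := by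
    apply Finset.Subset.antisymm
    · intro b hb
      simp only [Finset.mem_union, Finset.mem_filter, Finset.mem_singleton] at hb
      rcases hb with ⟨h, _⟩ | ⟨h, _⟩ | rfl
      · exact h
      · exact h
      · exact hc
    · intro b hb
      simp only [Finset.mem_union, Finset.mem_filter, Finset.mem_singleton]
      rcases tri c b with h | h | h
      · exact Or.inl ⟨hb, h⟩
      · exact Or.inr (Or.inr h.symm)
      · exact Or.inr (Or.inl ⟨hb, h⟩)
  have d1 : Disjoint (F.filter fun b => v.lt b c) ({c} : Finset Cand) := by
    simp only [Finset.disjoint_singleton_right, Finset.mem_filter, not_and]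
    exact fun _ => irr c
  have d2 : Disjoint (F.filter fun b => v.lt c b)
      ((F.filter fun b => v.lt b c) ∪ {c}) := by
    rw [Finset.disjoint_union_right]
    constructor
    · rw [Finset.disjoint_left]
      rintro a ha hb
      rw [Finset.mem_filter] at ha hb
      exact asym c a ha.2 hb.2
    · simp only [Finset.disjoint_singleton_right, Finset.mem_filter, not_and]
      exact fun _ => irr c
  have e1 := Finset.card_union_of_disjoint d1
  have e2 := Finset.card_union_of_disjoint d2
  rw [hU] at e2
  rw [e1] at e2
  simp only [Finset.card_singleton] at e2
  omega

lemma vote_indicator (v : LinearOrder Cand) (t : ℕ) (F M : Finset Cand) (m : Cand)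
    (hMF : M ⊆ F) (hcard : F.card + 1 = t + M.card)
    (hlow : ∀ a ∈ F, a ∉ M → ∀ b ∈ M, v.lt b a)
    (hmM : m ∈ M) (hm : ∀ b ∈ M, b ≠ m → v.lt b m) :
    ∀ c ∈ F,
      (if t ≤ (F.filter fun b => v.lt c b).card then (1 : ℕ) else 0)
        = if c ∈ M ∧ c ≠ m then 1 else 0 := by
  have asym : ∀ a b : Cand, v.lt a b → ¬ v.lt b a := fun a b h => by
    letI := v; exact lt_asymm h
  have irr : ∀ a : Cand, ¬ v.lt a a := fun a => by letI := v; exact lt_irrefl a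
  intro c hc
  have hsplit := card_split v hc
  by_cases hcM : c ∈ M
  · by_cases hcm : c = m
    · subst hcm
      have habove : (F.filter fun b => v.lt b c) = M.erase c := by
        apply Finset.Subset.antisymm
        · intro a ha
          rw [Finset.mem_filter] at ha
          obtain ⟨haF, hlt⟩ := ha
          have haM : a ∈ M := by
            by_contra haM
            exact asym a c hlt (hlow a haF haM c hcM)
          exact Finset.mem_erase.2 ⟨fun h => irr c (h ▸ hlt), haM⟩
        · intro a ha
          obtain ⟨hne, haM⟩ := Finset.mem_erase.1 ha
          exact Finset.mem_filter.2 ⟨hMF haM, hm a haM hne⟩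
      have hcarda : (F.filter fun b => v.lt b c).card = M.card - 1 := by
        rw [habove, Finset.card_erase_of_mem hcM]
      have hM1 : 1 ≤ M.card := Finset.card_pos.2 ⟨c, hcM⟩
      rw [if_neg (by omega : ¬ t ≤ (F.filter fun b => v.lt c b).card),
        if_neg (by simp)]
    · have hsub : (F.filter fun b => v.lt b c) ⊆ (M.erase m).erase c := by
        intro a ha
        rw [Finset.mem_filter] at ha
        obtain ⟨haF, hlt⟩ := ha
        have haM : a ∈ M := by
          by_contra haM
          exact asym a c hlt (hlow a haF haM c hcM)
        refine Finset.mem_erase.2 ⟨fun h => irr c (h ▸ hlt),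
          Finset.mem_erase.2 ⟨fun h => ?_, haM⟩⟩
        exact asym c m (hm c hcM hcm) (h ▸ hlt)
      have hle := Finset.card_le_card hsub
      rw [Finset.card_erase_of_mem (Finset.mem_erase.2 ⟨hcm, hcM⟩),
        Finset.card_erase_of_mem hmM] at hle
      have hM2 : 2 ≤ M.card := by
        have hsub2 : ({c, m} : Finset Cand) ⊆ M := by
          intro a ha
          rcases Finset.mem_insert.1 ha with rfl | ha
          · exact hcM
          · exact (Finset.mem_singleton.1 ha) ▸ hmM
        have := Finset.card_le_card hsub2
        rwa [Finset.card_pair hcm] at this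
      rw [if_pos (by omega : t ≤ (F.filter fun b => v.lt c b).card),
        if_pos ⟨hcM, hcm⟩]
  · have hsub : M ⊆ F.filter fun b => v.lt b c := fun b hb =>
      Finset.mem_filter.2 ⟨hMF hb, hlow c hc hcM b hb⟩
    have hge := Finset.card_le_card hsub
    rw [if_neg (by omega : ¬ t ≤ (F.filter fun b => v.lt c b).card),
      if_neg (by simp [hcM])]

omit [DecidableEq Cand] in
lemma pairwise_getLast {R : Cand → Cand → Prop} {l : List Cand} (h : List.Pairwise R l)
    (hne : l ≠ []) {a : Cand} (ha : a ∈ l) (hne2 : a ≠ l.getLast hne) :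
    R a (l.getLast hne) := by
  have hdec := List.dropLast_append_getLast hne
  rw [← hdec] at h ha
  rw [List.pairwise_append] at h
  rcases List.mem_append.1 ha with h1 | h1
  · exact h.2.2 a h1 _ (List.mem_singleton_self _)
  · exact absurd (List.mem_singleton.1 h1) hne2

omit [DecidableEq Cand] in
lemma pairwise_four {R : Cand → Cand → Prop} {a b c d : Cand}
    (h : List.Pairwise R [a, b, c, d]) :
    R a b ∧ R a c ∧ R a d ∧ R b c ∧ R b d ∧ R c d := by
  simp only [List.pairwise_cons, List.mem_cons, List.not_mem_nil, or_false,
    List.mem_singleton, forall_eq_or_imp, forall_eq, List.Pairwise.nil, and_true] at h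
  tauto

end AuxLemmas

set_option maxHeartbeats 1600000 in
theorem t_veto_district_gadget [DecidableEq Cand]
    (t : ℕ) (ht : 1 ≤ t)
    (s x y z : Cand) (hdist : ([s, x, y, z] : List Cand).Nodup)
    (α : Finset Cand)
    (hαcard : α.card = t - 1)
    (hαs : Disjoint α ({s, x, y, z} : Finset Cand))
    (A : Finset Cand) (hxyzA : ({x, y, z} : Finset Cand) ⊆ A)
    (hAC : Disjoint A (insert s α))
    (v : Fin 5 → LinearOrder Cand)
    (hv : ∃ la' lα : List Cand,
      la'.toFinset = A \ ({x, y, z} : Finset Cand) ∧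
      la'.length = (A \ ({x, y, z} : Finset Cand)).card ∧
      lα.toFinset = α ∧ lα.length = t - 1 ∧
      ∀ j : Fin 5,
        IsTopSegment (v j) (insert s α ∪ A)
          ((![[s, x, y, z], [s, y, z, x], [s, z, x, y], [x, y, z, s],
              [x, y, z, s]] : Fin 5 → List Cand) j ++ la' ++ lα)) :
    ∀ Ahat ⊆ A, Ahat.Nonempty →
      (vetoWinners t (insert s α ∪ Ahat) ((List.finRange 5).map v) = Ahat ↔
        Ahat = ({x, y, z} : Finset Cand)) := by
  obtain ⟨la', lα, hla'F, hla'len, hlαF, hlαlen, htop⟩ := hv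
  intro Ahat hAhatA hAhatne
  -- distinctness facts
  obtain ⟨⟨hsx, hsy, hsz⟩, ⟨hxy, hxz⟩, hyz⟩ :
      (s ≠ x ∧ s ≠ y ∧ s ≠ z) ∧ (x ≠ y ∧ x ≠ z) ∧ y ≠ z := by
    simp only [List.nodup_cons, List.mem_cons, List.not_mem_nil, or_false,
      List.mem_singleton, List.nodup_nil, and_true] at hdist
    tauto
  -- membership facts
  have hxA : x ∈ A := hxyzA (by simp)
  have hyA : y ∈ A := hxyzA (by simp)
  have hzA : z ∈ A := hxyzA (by simp)
  have hsA : s ∉ A := fun h => (Finset.disjoint_left.1 hAC) h (Finset.mem_insert_self s α)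
  have hαA : ∀ a ∈ α, a ∉ A := fun a ha hA =>
    (Finset.disjoint_left.1 hAC) hA (Finset.mem_insert_of_mem ha)
  have hα4 : ∀ a ∈ α, a ≠ s ∧ a ≠ x ∧ a ≠ y ∧ a ≠ z := by
    intro a ha
    have h := Finset.disjoint_left.1 hαs ha
    simp only [Finset.mem_insert, Finset.mem_singleton] at h
    tauto
  have hsα : s ∉ α := fun h => (hα4 s h).1 rfl
  have hsAhat : s ∉ Ahat := fun h => hsA (hAhatA h)
  have hαAhat : ∀ a ∈ α, a ∉ Ahat := fun a ha h => hαA a ha (hAhatA h)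
  set F : Finset Cand := insert s α ∪ Ahat with hFdef
  set M : Finset Cand := insert s Ahat with hMdef
  have hsF : s ∈ F := Finset.mem_union_left _ (Finset.mem_insert_self s α)
  have hsM : s ∈ M := Finset.mem_insert_self s Ahat
  have hMF : M ⊆ F := by
    intro b hb
    rcases Finset.mem_insert.1 hb with rfl | hb
    · exact hsF
    · exact Finset.mem_union_right _ hb
  have hAhatF : ∀ a ∈ Ahat, a ∈ F := fun a ha => Finset.mem_union_right _ ha
  have hαF : ∀ a ∈ α, a ∈ F := fun a ha =>
    Finset.mem_union_left _ (Finset.mem_insert_of_mem ha)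
  have hFloc : ∀ a ∈ F, a = s ∨ a ∈ α ∨ a ∈ Ahat := by
    intro a ha
    rcases Finset.mem_union.1 ha with h | h
    · rcases Finset.mem_insert.1 h with rfl | h
      · exact Or.inl rfl
      · exact Or.inr (Or.inl h)
    · exact Or.inr (Or.inr h)
  have hαnotM : ∀ a ∈ α, a ∉ M := by
    intro a ha hM
    rcases Finset.mem_insert.1 hM with rfl | hM
    · exact hsα ha
    · exact hαAhat a ha hM
  have hlowset : ∀ a ∈ F, a ∉ M → a ∈ α := by
    intro a haF haM
    rcases hFloc a haF with rfl | h | h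
    · exact absurd hsM haM
    · exact h
    · exact absurd (Finset.mem_insert_of_mem h) haM
  -- cardinalities
  have hcard : F.card + 1 = t + M.card := by
    have hd : Disjoint (insert s α) Ahat := by
      rw [Finset.disjoint_left]
      intro b hb hb'
      exact (Finset.disjoint_left.1 hAC) (hAhatA hb') hb
    have h1 : F.card = (insert s α).card + Ahat.card := Finset.card_union_of_disjoint hd
    have h2 : (insert s α).card = α.card + 1 := Finset.card_insert_of_notMem hsα
    have h3 : M.card = Ahat.card + 1 := Finset.card_insert_of_notMem hsAhat
    omega
  -- ordering facts per vote
  have hpair : ∀ j : Fin 5,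
      (((![[s, x, y, z], [s, y, z, x], [s, z, x, y], [x, y, z, s],
          [x, y, z, s]] : Fin 5 → List Cand) j ++ la') ++ lα).Pairwise
        (fun a b => (v j).lt a b) := by
    intro j
    letI := v j
    exact List.isChain_iff_pairwise.mp ((htop j).2.1)
  have hBp : ∀ j : Fin 5,
      ((![[s, x, y, z], [s, y, z, x], [s, z, x, y], [x, y, z, s],
          [x, y, z, s]] : Fin 5 → List Cand) j).Pairwise (fun a b => (v j).lt a b) :=
    fun j => (List.pairwise_append.1 (List.pairwise_append.1 (hpair j)).1).1
  have hla'p : ∀ j : Fin 5, la'.Pairwise (fun a b => (v j).lt a b) :=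
    fun j => (List.pairwise_append.1 (List.pairwise_append.1 (hpair j)).1).2.1
  have hcrossB : ∀ j : Fin 5,
      ∀ a ∈ (![[s, x, y, z], [s, y, z, x], [s, z, x, y], [x, y, z, s],
          [x, y, z, s]] : Fin 5 → List Cand) j, ∀ b ∈ la', (v j).lt a b :=
    fun j => (List.pairwise_append.1 (List.pairwise_append.1 (hpair j)).1).2.2
  have hcrossα : ∀ j : Fin 5,
      ∀ a ∈ ((![[s, x, y, z], [s, y, z, x], [s, z, x, y], [x, y, z, s],
          [x, y, z, s]] : Fin 5 → List Cand) j ++ la'), ∀ b ∈ lα, (v j).lt a b :=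
    fun j => (List.pairwise_append.1 (hpair j)).2.2
  have hmemla' : ∀ a : Cand, a ∈ la' ↔ a ∈ A \ ({x, y, z} : Finset Cand) := by
    intro a
    rw [← List.mem_toFinset, hla'F]
  have hmemlα : ∀ a : Cand, a ∈ lα ↔ a ∈ α := by
    intro a
    rw [← List.mem_toFinset, hlαF]
  have hBmem : ∀ j : Fin 5, ∀ b : Cand, (b = s ∨ b = x ∨ b = y ∨ b = z) →
      b ∈ (![[s, x, y, z], [s, y, z, x], [s, z, x, y], [x, y, z, s],
          [x, y, z, s]] : Fin 5 → List Cand) j := by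
    intro j b hb
    fin_cases j <;> rcases hb with rfl | rfl | rfl | rfl <;> simp
  have hMloc : ∀ b ∈ M, (b = s ∨ b = x ∨ b = y ∨ b = z) ∨
      (b ∈ Ahat ∧ b ∈ A \ ({x, y, z} : Finset Cand)) := by
    intro b hb
    rcases Finset.mem_insert.1 hb with rfl | hb
    · exact Or.inl (Or.inl rfl)
    · by_cases h3 : b = x ∨ b = y ∨ b = z
      · exact Or.inl (Or.inr h3)
      · push_neg at h3
        refine Or.inr ⟨hb, Finset.mem_sdiff.2 ⟨hAhatA hb, ?_⟩⟩
        simp only [Finset.mem_insert, Finset.mem_singleton]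
        tauto
  have hMtop : ∀ j : Fin 5, ∀ b ∈ M,
      b ∈ (![[s, x, y, z], [s, y, z, x], [s, z, x, y], [x, y, z, s],
          [x, y, z, s]] : Fin 5 → List Cand) j ++ la' := by
    intro j b hb
    rcases hMloc b hb with h | ⟨_, h⟩
    · exact List.mem_append.2 (Or.inl (hBmem j b h))
    · exact List.mem_append.2 (Or.inr ((hmemla' b).2 h))
  have hlow : ∀ j : Fin 5, ∀ a ∈ F, a ∉ M → ∀ b ∈ M, (v j).lt b a := by
    intro j a haF haM b hb
    exact hcrossα j b (hMtop j b hb) a ((hmemlα a).2 (hlowset a haF haM))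
  -- score formula
  have hscore : ∀ (mm : Fin 5 → Cand), (∀ j, mm j ∈ M) →
      (∀ j : Fin 5, ∀ b ∈ M, b ≠ mm j → (v j).lt b (mm j)) →
      ∀ c ∈ F, vetoScore t F ((List.finRange 5).map v) c
        = ∑ j : Fin 5, (if c ∈ M ∧ c ≠ mm j then 1 else 0) := by
    intro mm h1 h2 c hc
    rw [vetoScore, List.map_map, ← Fin.sum_univ_def]
    exact Finset.sum_congr rfl fun j _ =>
      vote_indicator (v j) t F M (mm j) hMF hcard (hlow j) (h1 j) (h2 j) c hc
  have hscore_le : ∀ (mm : Fin 5 → Cand), ∀ c : Cand,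
      (∑ j : Fin 5, (if c ∈ M ∧ c ≠ mm j then (1 : ℕ) else 0)) ≤ 5 := by
    intro mm c
    calc (∑ j : Fin 5, (if c ∈ M ∧ c ≠ mm j then (1 : ℕ) else 0))
        ≤ ∑ _j : Fin 5, 1 := Finset.sum_le_sum fun j _ => by split <;> omega
      _ = 5 := by simp
  by_cases hsub3 : Ahat ⊆ ({x, y, z} : Finset Cand)
  · -- Ahat is a nonempty subset of {x, y, z}
    -- extract the pairwise order facts of the four-blocks
    obtain ⟨h0sx, h0sy, h0sz, h0xy, h0xz, h0yz⟩ := pairwise_four (hBp 0)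
    obtain ⟨h1sy, h1sz, h1sx, h1yz, h1yx, h1zx⟩ := pairwise_four (hBp 1)
    obtain ⟨h2sz, h2sx, h2sy, h2zx, h2zy, h2xy⟩ := pairwise_four (hBp 2)
    obtain ⟨h3xy, h3xz, h3xs, h3yz, h3ys, h3zs⟩ := pairwise_four (hBp 3)
    obtain ⟨h4xy, h4xz, h4xs, h4yz, h4ys, h4zs⟩ := pairwise_four (hBp 4)
    have fin5 : ∀ (P : Fin 5 → Prop), P 0 → P 1 → P 2 → P 3 → P 4 → ∀ j, P j := by
      intro P h0 h1 h2 h3 h4 j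
      fin_cases j <;> assumption
    by_cases hx : x ∈ Ahat <;> by_cases hy : y ∈ Ahat <;> by_cases hz : z ∈ Ahat
    · -- Ahat = {x, y, z}
      have hAeq : Ahat = ({x, y, z} : Finset Cand) := by
        apply Finset.Subset.antisymm hsub3
        intro a ha
        simp only [Finset.mem_insert, Finset.mem_singleton] at ha
        rcases ha with rfl | rfl | rfl <;> assumption
      have hMc : ∀ b ∈ M, b = s ∨ b = x ∨ b = y ∨ b = z := by
        intro b hb
        rcases Finset.mem_insert.1 hb with rfl | hb
        · exact Or.inl rfl
        · have := hsub3 hb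
          simp only [Finset.mem_insert, Finset.mem_singleton] at this
          tauto
      have hxM : x ∈ M := Finset.mem_insert_of_mem hx
      have hyM : y ∈ M := Finset.mem_insert_of_mem hy
      have hzM : z ∈ M := Finset.mem_insert_of_mem hz
      have hmm1 : ∀ j : Fin 5, (![z, x, y, s, s] : Fin 5 → Cand) j ∈ M :=
        fin5 _ hzM hxM hyM hsM hsM
      have hmm2 : ∀ j : Fin 5, ∀ b ∈ M, b ≠ (![z, x, y, s, s] : Fin 5 → Cand) j →
          (v j).lt b ((![z, x, y, s, s] : Fin 5 → Cand) j) := by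
        refine fin5 _ ?_ ?_ ?_ ?_ ?_ <;> intro b hb hbne <;>
          rcases hMc b hb with rfl | rfl | rfl | rfl
        · exact h0sz
        · exact h0xz
        · exact h0yz
        · exact absurd rfl hbne
        · exact h1sx
        · exact absurd rfl hbne
        · exact h1yx
        · exact h1zx
        · exact h2sy
        · exact h2xy
        · exact absurd rfl hbne
        · exact h2zy
        · exact absurd rfl hbne
        · exact h3xs
        · exact h3ys
        · exact h3zs
        · exact absurd rfl hbne
        · exact h4xs
        · exact h4ys
        · exact h4zs
      have hseq := hscore (![z, x, y, s, s]) hmm1 hmm2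
      have hsc_s : vetoScore t F ((List.finRange 5).map v) s = 3 := by
        rw [hseq s hsF]
        simp [Fin.sum_univ_five, hsM, hsx, hsy, hsz]
      have hsc_x : vetoScore t F ((List.finRange 5).map v) x = 4 := by
        rw [hseq x (hAhatF x hx)]
        simp [Fin.sum_univ_five, hxM, hxy, hxz, Ne.symm hsx]
      have hsc_y : vetoScore t F ((List.finRange 5).map v) y = 4 := by
        rw [hseq y (hAhatF y hy)]
        simp [Fin.sum_univ_five, hyM, hyz, Ne.symm hxy, Ne.symm hsy]
      have hsc_z : vetoScore t F ((List.finRange 5).map v) z = 4 := by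
        rw [hseq z (hAhatF z hz)]
        simp [Fin.sum_univ_five, hzM, Ne.symm hxz, Ne.symm hyz, Ne.symm hsz]
      have hsc_α : ∀ a ∈ α, vetoScore t F ((List.finRange 5).map v) a = 0 := by
        intro a ha
        rw [hseq a (hαF a ha)]
        simp [hαnotM a ha]
      refine iff_of_true ?_ hAeq
      rw [vetoWinners]
      apply Finset.Subset.antisymm
      · intro a ha
        rw [Finset.mem_filter] at ha
        obtain ⟨haF, hmax⟩ := ha
        rcases hFloc a haF with rfl | haα | haAhat
        · have := hmax x (hAhatF x hx)
          rw [hsc_x, hsc_s] at this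
          omega
        · have := hmax x (hAhatF x hx)
          rw [hsc_x, hsc_α a haα] at this
          omega
        · exact haAhat
      · intro a ha
        rw [Finset.mem_filter]
        refine ⟨hAhatF a ha, fun b hb => ?_⟩
        have hsa : vetoScore t F ((List.finRange 5).map v) a = 4 := by
          have := hsub3 ha
          simp only [Finset.mem_insert, Finset.mem_singleton] at this
          rcases this with rfl | rfl | rfl
          · exact hsc_x
          · exact hsc_y
          · exact hsc_z
        rw [hsa]
        rcases hFloc b hb with rfl | hbα | hbAhat
        · rw [hsc_s]; omega
        · rw [hsc_α b hbα]; omega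
        · have := hsub3 hbAhat
          simp only [Finset.mem_insert, Finset.mem_singleton] at this
          rcases this with rfl | rfl | rfl
          · rw [hsc_x]
          · rw [hsc_y]
          · rw [hsc_z]
    · -- Ahat = {x, y}
      have hMc : ∀ b ∈ M, b = s ∨ b = x ∨ b = y := by
        intro b hb
        rcases Finset.mem_insert.1 hb with rfl | hb
        · exact Or.inl rfl
        · have := hsub3 hb
          simp only [Finset.mem_insert, Finset.mem_singleton] at this
          rcases this with rfl | rfl | rfl
          · tauto
          · tauto
          · exact absurd hb hz
      have hxM : x ∈ M := Finset.mem_insert_of_mem hx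
      have hyM : y ∈ M := Finset.mem_insert_of_mem hy
      have hmm1 : ∀ j : Fin 5, (![y, x, y, s, s] : Fin 5 → Cand) j ∈ M :=
        fin5 _ hyM hxM hyM hsM hsM
      have hmm2 : ∀ j : Fin 5, ∀ b ∈ M, b ≠ (![y, x, y, s, s] : Fin 5 → Cand) j →
          (v j).lt b ((![y, x, y, s, s] : Fin 5 → Cand) j) := by
        refine fin5 _ ?_ ?_ ?_ ?_ ?_ <;> intro b hb hbne <;>
          rcases hMc b hb with rfl | rfl | rfl
        · exact h0sy
        · exact h0xy
        · exact absurd rfl hbne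
        · exact h1sx
        · exact absurd rfl hbne
        · exact h1yx
        · exact h2sy
        · exact h2xy
        · exact absurd rfl hbne
        · exact absurd rfl hbne
        · exact h3xs
        · exact h3ys
        · exact absurd rfl hbne
        · exact h4xs
        · exact h4ys
      have hseq := hscore (![y, x, y, s, s]) hmm1 hmm2
      have hsc_x : vetoScore t F ((List.finRange 5).map v) x = 4 := by
        rw [hseq x (hAhatF x hx)]
        simp [Fin.sum_univ_five, hxM, hxy, Ne.symm hsx]
      have hsc_y : vetoScore t F ((List.finRange 5).map v) y = 3 := by
        rw [hseq y (hAhatF y hy)]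
        simp [Fin.sum_univ_five, hyM, Ne.symm hxy, Ne.symm hsy]
      refine iff_of_false (fun h => ?_) (fun h => hz (h ▸ (by simp : z ∈ ({x, y, z} : Finset Cand))))
      have hyw : y ∈ vetoWinners t F ((List.finRange 5).map v) := by rw [h]; exact hy
      rw [vetoWinners, Finset.mem_filter] at hyw
      have := hyw.2 x (hAhatF x hx)
      rw [hsc_x, hsc_y] at this
      omega
    · -- Ahat = {x, z}
      have hMc : ∀ b ∈ M, b = s ∨ b = x ∨ b = z := by
        intro b hb
        rcases Finset.mem_insert.1 hb with rfl | hb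
        · exact Or.inl rfl
        · have := hsub3 hb
          simp only [Finset.mem_insert, Finset.mem_singleton] at this
          rcases this with rfl | rfl | rfl
          · tauto
          · exact absurd hb hy
          · tauto
      have hxM : x ∈ M := Finset.mem_insert_of_mem hx
      have hzM : z ∈ M := Finset.mem_insert_of_mem hz
      have hmm1 : ∀ j : Fin 5, (![z, x, x, s, s] : Fin 5 → Cand) j ∈ M :=
        fin5 _ hzM hxM hxM hsM hsM
      have hmm2 : ∀ j : Fin 5, ∀ b ∈ M, b ≠ (![z, x, x, s, s] : Fin 5 → Cand) j →
          (v j).lt b ((![z, x, x, s, s] : Fin 5 → Cand) j) := by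
        refine fin5 _ ?_ ?_ ?_ ?_ ?_ <;> intro b hb hbne <;>
          rcases hMc b hb with rfl | rfl | rfl
        · exact h0sz
        · exact h0xz
        · exact absurd rfl hbne
        · exact h1sx
        · exact absurd rfl hbne
        · exact h1zx
        · exact h2sx
        · exact absurd rfl hbne
        · exact h2zx
        · exact absurd rfl hbne
        · exact h3xs
        · exact h3zs
        · exact absurd rfl hbne
        · exact h4xs
        · exact h4zs
      have hseq := hscore (![z, x, x, s, s]) hmm1 hmm2
      have hsc_x : vetoScore t F ((List.finRange 5).map v) x = 3 := by
        rw [hseq x (hAhatF x hx)]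
        simp [Fin.sum_univ_five, hxM, hxz, Ne.symm hsx]
      have hsc_z : vetoScore t F ((List.finRange 5).map v) z = 4 := by
        rw [hseq z (hAhatF z hz)]
        simp [Fin.sum_univ_five, hzM, Ne.symm hxz, Ne.symm hsz]
      refine iff_of_false (fun h => ?_) (fun h => hy (h ▸ (by simp : y ∈ ({x, y, z} : Finset Cand))))
      have hxw : x ∈ vetoWinners t F ((List.finRange 5).map v) := by rw [h]; exact hx
      rw [vetoWinners, Finset.mem_filter] at hxw
      have := hxw.2 z (hAhatF z hz)
      rw [hsc_x, hsc_z] at this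
      omega
    · -- Ahat = {x}
      have hMc : ∀ b ∈ M, b = s ∨ b = x := by
        intro b hb
        rcases Finset.mem_insert.1 hb with rfl | hb
        · exact Or.inl rfl
        · have := hsub3 hb
          simp only [Finset.mem_insert, Finset.mem_singleton] at this
          rcases this with rfl | rfl | rfl
          · tauto
          · exact absurd hb hy
          · exact absurd hb hz
      have hxM : x ∈ M := Finset.mem_insert_of_mem hx
      have hmm1 : ∀ j : Fin 5, (![x, x, x, s, s] : Fin 5 → Cand) j ∈ M :=
        fin5 _ hxM hxM hxM hsM hsM
      have hmm2 : ∀ j : Fin 5, ∀ b ∈ M, b ≠ (![x, x, x, s, s] : Fin 5 → Cand) j →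
          (v j).lt b ((![x, x, x, s, s] : Fin 5 → Cand) j) := by
        refine fin5 _ ?_ ?_ ?_ ?_ ?_ <;> intro b hb hbne <;>
          rcases hMc b hb with rfl | rfl
        · exact h0sx
        · exact absurd rfl hbne
        · exact h1sx
        · exact absurd rfl hbne
        · exact h2sx
        · exact absurd rfl hbne
        · exact absurd rfl hbne
        · exact h3xs
        · exact absurd rfl hbne
        · exact h4xs
      have hseq := hscore (![x, x, x, s, s]) hmm1 hmm2
      have hsc_s : vetoScore t F ((List.finRange 5).map v) s = 3 := by
        rw [hseq s hsF]
        simp [Fin.sum_univ_five, hsM, hsx]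
      have hsc_x : vetoScore t F ((List.finRange 5).map v) x = 2 := by
        rw [hseq x (hAhatF x hx)]
        simp [Fin.sum_univ_five, hxM, Ne.symm hsx]
      refine iff_of_false (fun h => ?_) (fun h => hy (h ▸ (by simp : y ∈ ({x, y, z} : Finset Cand))))
      have hxw : x ∈ vetoWinners t F ((List.finRange 5).map v) := by rw [h]; exact hx
      rw [vetoWinners, Finset.mem_filter] at hxw
      have := hxw.2 s hsF
      rw [hsc_x, hsc_s] at this
      omega
    · -- Ahat = {y, z}
      have hMc : ∀ b ∈ M, b = s ∨ b = y ∨ b = z := by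
        intro b hb
        rcases Finset.mem_insert.1 hb with rfl | hb
        · exact Or.inl rfl
        · have := hsub3 hb
          simp only [Finset.mem_insert, Finset.mem_singleton] at this
          rcases this with rfl | rfl | rfl
          · exact absurd hb hx
          · tauto
          · tauto
      have hyM : y ∈ M := Finset.mem_insert_of_mem hy
      have hzM : z ∈ M := Finset.mem_insert_of_mem hz
      have hmm1 : ∀ j : Fin 5, (![z, z, y, s, s] : Fin 5 → Cand) j ∈ M :=
        fin5 _ hzM hzM hyM hsM hsM
      have hmm2 : ∀ j : Fin 5, ∀ b ∈ M, b ≠ (![z, z, y, s, s] : Fin 5 → Cand) j →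
          (v j).lt b ((![z, z, y, s, s] : Fin 5 → Cand) j) := by
        refine fin5 _ ?_ ?_ ?_ ?_ ?_ <;> intro b hb hbne <;>
          rcases hMc b hb with rfl | rfl | rfl
        · exact h0sz
        · exact h0yz
        · exact absurd rfl hbne
        · exact h1sz
        · exact h1yz
        · exact absurd rfl hbne
        · exact h2sy
        · exact absurd rfl hbne
        · exact h2zy
        · exact absurd rfl hbne
        · exact h3ys
        · exact h3zs
        · exact absurd rfl hbne
        · exact h4ys
        · exact h4zs
      have hseq := hscore (![z, z, y, s, s]) hmm1 hmm2
      have hsc_y : vetoScore t F ((List.finRange 5).map v) y = 4 := by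
        rw [hseq y (hAhatF y hy)]
        simp [Fin.sum_univ_five, hyM, hyz, Ne.symm hsy]
      have hsc_z : vetoScore t F ((List.finRange 5).map v) z = 3 := by
        rw [hseq z (hAhatF z hz)]
        simp [Fin.sum_univ_five, hzM, Ne.symm hyz, Ne.symm hsz]
      refine iff_of_false (fun h => ?_) (fun h => hx (h ▸ (by simp : x ∈ ({x, y, z} : Finset Cand))))
      have hzw : z ∈ vetoWinners t F ((List.finRange 5).map v) := by rw [h]; exact hz
      rw [vetoWinners, Finset.mem_filter] at hzw
      have := hzw.2 y (hAhatF y hy)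
      rw [hsc_y, hsc_z] at this
      omega
    · -- Ahat = {y}
      have hMc : ∀ b ∈ M, b = s ∨ b = y := by
        intro b hb
        rcases Finset.mem_insert.1 hb with rfl | hb
        · exact Or.inl rfl
        · have := hsub3 hb
          simp only [Finset.mem_insert, Finset.mem_singleton] at this
          rcases this with rfl | rfl | rfl
          · exact absurd hb hx
          · tauto
          · exact absurd hb hz
      have hyM : y ∈ M := Finset.mem_insert_of_mem hy
      have hmm1 : ∀ j : Fin 5, (![y, y, y, s, s] : Fin 5 → Cand) j ∈ M :=
        fin5 _ hyM hyM hyM hsM hsM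
      have hmm2 : ∀ j : Fin 5, ∀ b ∈ M, b ≠ (![y, y, y, s, s] : Fin 5 → Cand) j →
          (v j).lt b ((![y, y, y, s, s] : Fin 5 → Cand) j) := by
        refine fin5 _ ?_ ?_ ?_ ?_ ?_ <;> intro b hb hbne <;>
          rcases hMc b hb with rfl | rfl
        · exact h0sy
        · exact absurd rfl hbne
        · exact h1sy
        · exact absurd rfl hbne
        · exact h2sy
        · exact absurd rfl hbne
        · exact absurd rfl hbne
        · exact h3ys
        · exact absurd rfl hbne
        · exact h4ys
      have hseq := hscore (![y, y, y, s, s]) hmm1 hmm2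
      have hsc_s : vetoScore t F ((List.finRange 5).map v) s = 3 := by
        rw [hseq s hsF]
        simp [Fin.sum_univ_five, hsM, hsy]
      have hsc_y : vetoScore t F ((List.finRange 5).map v) y = 2 := by
        rw [hseq y (hAhatF y hy)]
        simp [Fin.sum_univ_five, hyM, Ne.symm hsy]
      refine iff_of_false (fun h => ?_) (fun h => hx (h ▸ (by simp : x ∈ ({x, y, z} : Finset Cand))))
      have hyw : y ∈ vetoWinners t F ((List.finRange 5).map v) := by rw [h]; exact hy
      rw [vetoWinners, Finset.mem_filter] at hyw
      have := hyw.2 s hsF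
      rw [hsc_y, hsc_s] at this
      omega
    · -- Ahat = {z}
      have hMc : ∀ b ∈ M, b = s ∨ b = z := by
        intro b hb
        rcases Finset.mem_insert.1 hb with rfl | hb
        · exact Or.inl rfl
        · have := hsub3 hb
          simp only [Finset.mem_insert, Finset.mem_singleton] at this
          rcases this with rfl | rfl | rfl
          · exact absurd hb hx
          · exact absurd hb hy
          · tauto
      have hzM : z ∈ M := Finset.mem_insert_of_mem hz
      have hmm1 : ∀ j : Fin 5, (![z, z, z, s, s] : Fin 5 → Cand) j ∈ M :=
        fin5 _ hzM hzM hzM hsM hsM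
      have hmm2 : ∀ j : Fin 5, ∀ b ∈ M, b ≠ (![z, z, z, s, s] : Fin 5 → Cand) j →
          (v j).lt b ((![z, z, z, s, s] : Fin 5 → Cand) j) := by
        refine fin5 _ ?_ ?_ ?_ ?_ ?_ <;> intro b hb hbne <;>
          rcases hMc b hb with rfl | rfl
        · exact h0sz
        · exact absurd rfl hbne
        · exact h1sz
        · exact absurd rfl hbne
        · exact h2sz
        · exact absurd rfl hbne
        · exact absurd rfl hbne
        · exact h3zs
        · exact absurd rfl hbne
        · exact h4zs
      have hseq := hscore (![z, z, z, s, s]) hmm1 hmm2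
      have hsc_s : vetoScore t F ((List.finRange 5).map v) s = 3 := by
        rw [hseq s hsF]
        simp [Fin.sum_univ_five, hsM, hsz]
      have hsc_z : vetoScore t F ((List.finRange 5).map v) z = 2 := by
        rw [hseq z (hAhatF z hz)]
        simp [Fin.sum_univ_five, hzM, Ne.symm hsz]
      refine iff_of_false (fun h => ?_) (fun h => hx (h ▸ (by simp : x ∈ ({x, y, z} : Finset Cand))))
      have hzw : z ∈ vetoWinners t F ((List.finRange 5).map v) := by rw [h]; exact hz
      rw [vetoWinners, Finset.mem_filter] at hzw
      have := hzw.2 s hsF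
      rw [hsc_z, hsc_s] at this
      omega
    · -- Ahat empty: contradiction
      exfalso
      obtain ⟨a, ha⟩ := hAhatne
      have := hsub3 ha
      simp only [Finset.mem_insert, Finset.mem_singleton] at this
      rcases this with rfl | rfl | rfl
      · exact hx ha
      · exact hy ha
      · exact hz ha
  · -- Ahat has an element outside {x, y, z}
    rw [Finset.not_subset] at hsub3
    obtain ⟨w', hw'A, hw'3⟩ := hsub3
    have hw'la' : w' ∈ la' :=
      (hmemla' w').2 (Finset.mem_sdiff.2 ⟨hAhatA hw'A, hw'3⟩)
    set lw : List Cand := la'.filter (fun b => decide (b ∈ Ahat)) with hlwdef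
    have hlwne : lw ≠ [] := by
      intro h
      have hmem : w' ∈ lw := List.mem_filter.2 ⟨hw'la', by simpa using hw'A⟩
      rw [h] at hmem
      exact List.not_mem_nil hmem
    set w : Cand := lw.getLast hlwne with hwdef
    have hwlw : w ∈ lw := List.getLast_mem hlwne
    have hwla' : w ∈ la' := (List.mem_filter.1 hwlw).1
    have hwAhat : w ∈ Ahat := by
      have := (List.mem_filter.1 hwlw).2
      simpa using this
    have hwA' : w ∈ A \ ({x, y, z} : Finset Cand) := (hmemla' w).1 hwla'
    have hws : s ≠ w := fun h => hsA (h ▸ (Finset.mem_sdiff.1 hwA').1)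
    have hwM : w ∈ M := Finset.mem_insert_of_mem hwAhat
    have hmm2 : ∀ j : Fin 5, ∀ b ∈ M, b ≠ w → (v j).lt b w := by
      intro j b hb hbw
      rcases hMloc b hb with h | ⟨hbAhat, hbA'⟩
      · exact hcrossB j b (hBmem j b h) w hwla'
      · have hblw : b ∈ lw := List.mem_filter.2 ⟨(hmemla' b).2 hbA', by simpa using hbAhat⟩
        exact pairwise_getLast (List.Pairwise.sublist (List.filter_sublist) (hla'p j))
          hlwne hblw hbw
    have hseq := hscore (fun _ => w) (fun _ => hwM) hmm2
    have hsc_s : vetoScore t F ((List.finRange 5).map v) s = 5 := by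
      rw [hseq s hsF]
      simp [hsM, hws]
    have hwin_s : s ∈ vetoWinners t F ((List.finRange 5).map v) := by
      rw [vetoWinners, Finset.mem_filter]
      refine ⟨hsF, fun b hb => ?_⟩
      rw [hseq b hb, hsc_s]
      exact hscore_le _ b
    refine iff_of_false (fun h => ?_) (fun h => ?_)
    · rw [h] at hwin_s
      exact hsAhat hwin_s
    · rw [h] at hw'A
      exact hw'3 hw'A
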